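/- Let P(t) be the solution on [0,T] of the matrix Riccati equation dP/dt − P²/λ + Q + Q̄ = 0 with P(T) = Q_T + Q̄_T, and let Σ(t) solve dΣ/dt − (1/λ)(ΣP + PΣ) − (1/λ)Σ² + S*Q̄S − (Q̄S + S*Q̄) = 0 with Σ(T) = S_T*Q̄_T S_T − (Q̄_T S_T + S_T*Q̄_T). Then the map U(X,t) = P(t)X + Σ(t) E X from H×[0,T] to H satisfies the master equation ∂U/∂t(X,t) − (1/λ) D_X U(X,t) U(X,t) + (Q+Q̄)X + (S*Q̄S − Q̄S − S*Q̄) E X = 0 with terminal condition U(X,T) = (Q_T+Q̄_T)X + (S_T*Q̄_T S_T − Q̄_T S_T − S_T*Q̄_T) E X, where D_X U(X,t) is the Fréchet derivative of U in X, which acts by D_X U(X,t)Z = P(t)Z + Σ(t) E Z. -/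

import Mathlib

open MeasureTheory Set ContinuousLinearMap
open scoped RealInnerProductSpace

variable {Ω : Type*} [MeasurableSpace Ω] {n : ℕ}

/-- The expectation `E X ∈ ℝⁿ` of a square-integrable random variable `X ∈ L²(Ω;ℝⁿ)`. -/
noncomputable def expVal (μ : Measure Ω) [IsProbabilityMeasure μ]
    (X : Lp (EuclideanSpace ℝ (Fin n)) 2 μ) : EuclideanSpace ℝ (Fin n) :=
  ∫ ω, X ω ∂μ

/-- The map `U(X,t) = P(t) X + Σ(t) E X` from `L²(Ω;ℝⁿ) × [0,T]` to `L²(Ω;ℝⁿ)`. -/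
noncomputable def Uq (μ : Measure Ω) [IsProbabilityMeasure μ]
    (P Sg : ℝ → EuclideanSpace ℝ (Fin n) →L[ℝ] EuclideanSpace ℝ (Fin n))
    (X : Lp (EuclideanSpace ℝ (Fin n)) 2 μ) (t : ℝ) :
    Lp (EuclideanSpace ℝ (Fin n)) 2 μ :=
  (P t).compLp X + Lp.const 2 μ (Sg t (expVal μ X))

set_option maxHeartbeats 2000000

section helpers

variable (μ : Measure Ω) [IsProbabilityMeasure μ]

lemma integrable_of_L2 (X : Lp (EuclideanSpace ℝ (Fin n)) 2 μ) : Integrable X μ :=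
  (Lp.memLp X).integrable (by norm_num)

lemma expVal_compLp (A : EuclideanSpace ℝ (Fin n) →L[ℝ] EuclideanSpace ℝ (Fin n))
    (X : Lp (EuclideanSpace ℝ (Fin n)) 2 μ) :
    expVal μ (A.compLp X) = A (expVal μ X) := by
  unfold expVal
  rw [A.integral_compLp, A.integral_comp_comm (integrable_of_L2 μ X)]

lemma expVal_const (c : EuclideanSpace ℝ (Fin n)) : expVal μ (Lp.const 2 μ c) = c := by
  unfold expVal
  rw [integral_congr_ae (Lp.coeFn_const _ _ _)]
  simp

lemma expVal_add (X Y : Lp (EuclideanSpace ℝ (Fin n)) 2 μ) :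
    expVal μ (X + Y) = expVal μ X + expVal μ Y := by
  unfold expVal
  rw [integral_congr_ae (Lp.coeFn_add X Y)]
  simp only [Pi.add_apply]
  exact integral_add (integrable_of_L2 μ X) (integrable_of_L2 μ Y)

lemma compLp_comp (A B : EuclideanSpace ℝ (Fin n) →L[ℝ] EuclideanSpace ℝ (Fin n))
    (X : Lp (EuclideanSpace ℝ (Fin n)) 2 μ) :
    (A ∘L B).compLp X = A.compLp (B.compLp X) := by
  apply Lp.ext
  filter_upwards [(A ∘L B).coeFn_compLp X, A.coeFn_compLp (B.compLp X),
    B.coeFn_compLp X] with ω h1 h2 h3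
  rw [h1, h2, h3]; rfl

lemma compLp_const (A : EuclideanSpace ℝ (Fin n) →L[ℝ] EuclideanSpace ℝ (Fin n))
    (c : EuclideanSpace ℝ (Fin n)) :
    A.compLp (Lp.const 2 μ c) = Lp.const 2 μ (A c) := by
  apply Lp.ext
  filter_upwards [A.coeFn_compLp (Lp.const 2 μ c), Lp.coeFn_const 2 μ c,
    Lp.coeFn_const 2 μ (A c)] with ω h1 h2 h3
  rw [h1, h2, h3]; rfl

/-- `A ↦ A.compLp X`, as a continuous linear map. -/
noncomputable def compLpFlip (X : Lp (EuclideanSpace ℝ (Fin n)) 2 μ) :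
    (EuclideanSpace ℝ (Fin n) →L[ℝ] EuclideanSpace ℝ (Fin n)) →L[ℝ]
      Lp (EuclideanSpace ℝ (Fin n)) 2 μ :=
  LinearMap.mkContinuous
    { toFun := fun A => A.compLp X
      map_add' := fun A B => add_compLp A B X
      map_smul' := fun c A => smul_compLp c A X }
    ‖X‖ (fun A => (norm_compLp_le A X).trans_eq (mul_comm _ _))

@[simp] lemma compLpFlip_apply (X : Lp (EuclideanSpace ℝ (Fin n)) 2 μ)
    (A : EuclideanSpace ℝ (Fin n) →L[ℝ] EuclideanSpace ℝ (Fin n)) :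
    compLpFlip μ X A = A.compLp X := rfl

/-- The expectation as a continuous linear map on `L²`. -/
noncomputable def expValCLM :
    Lp (EuclideanSpace ℝ (Fin n)) 2 μ →L[ℝ] EuclideanSpace ℝ (Fin n) :=
  ∑ i : Fin n, (innerSL ℝ (Lp.const 2 μ (EuclideanSpace.single i 1))).smulRight
    (EuclideanSpace.single i (1 : ℝ))

lemma expValCLM_apply (X : Lp (EuclideanSpace ℝ (Fin n)) 2 μ) :
    expValCLM μ X = expVal μ X := by
  have hint := integrable_of_L2 μ X
  have h1 : ∀ j : Fin n, (expVal μ X) j = ∫ ω, (X ω) j ∂μ := fun j => by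
    unfold expVal
    exact ((EuclideanSpace.proj j (𝕜 := ℝ)).integral_comp_comm hint).symm
  have h2 : ∀ j : Fin n,
      (⟪Lp.const 2 μ (EuclideanSpace.single j (1 : ℝ)), X⟫ : ℝ) = ∫ ω, (X ω) j ∂μ := by
    intro j
    rw [L2.inner_def]
    refine integral_congr_ae ?_
    filter_upwards [Lp.coeFn_const 2 μ (EuclideanSpace.single j (1 : ℝ))] with ω h
    rw [h]
    simp [EuclideanSpace.inner_single_left]
  calc expValCLM μ X
      = ∑ i : Fin n, (expVal μ X i) • EuclideanSpace.single i (1 : ℝ) := by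
        simp only [expValCLM, ContinuousLinearMap.sum_apply, smulRight_apply, innerSL_apply_apply]
        exact Finset.sum_congr rfl fun i _ => by rw [h2, ← h1]
    _ = expVal μ X := by
        have := (EuclideanSpace.basisFun (Fin n) ℝ).sum_repr (expVal μ X)
        simpa [EuclideanSpace.basisFun_apply, EuclideanSpace.basisFun_repr] using this

lemma compLp_add_right (A : EuclideanSpace ℝ (Fin n) →L[ℝ] EuclideanSpace ℝ (Fin n))
    (f g : Lp (EuclideanSpace ℝ (Fin n)) 2 μ) :
    A.compLp (f + g) = A.compLp f + A.compLp g :=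
  map_add (A.compLpL 2 μ) f g

lemma sub_compLp' (A B : EuclideanSpace ℝ (Fin n) →L[ℝ] EuclideanSpace ℝ (Fin n))
    (X : Lp (EuclideanSpace ℝ (Fin n)) 2 μ) :
    (A - B).compLp X = A.compLp X - B.compLp X :=
  map_sub (compLpFlip μ X) A B

end helpers

/-- in the quadratic case, the map `U(X,t) = P(t) X + Σ(t) E X` built from the
solutions of the two Riccati equations solves the master equation in the Hilbert space
`H = L²(Ω;ℝⁿ)`, with Fréchet derivative acting as `D_X U(X,t) Z = P(t) Z + Σ(t) E Z` and the
prescribed terminal condition. -/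
theorem statement19 (μ : Measure Ω) [IsProbabilityMeasure μ]
    (Q Qb QT QbT S ST : EuclideanSpace ℝ (Fin n) →L[ℝ] EuclideanSpace ℝ (Fin n))
    (hQ : IsSelfAdjoint Q) (hQb : IsSelfAdjoint Qb)
    (hQT : IsSelfAdjoint QT) (hQbT : IsSelfAdjoint QbT)
    (T lam : ℝ) (hT : 0 < T) (hlam : 0 < lam)
    (P Sg : ℝ → EuclideanSpace ℝ (Fin n) →L[ℝ] EuclideanSpace ℝ (Fin n))
    (hP : ∀ τ ∈ Icc (0 : ℝ) T, HasDerivWithinAt P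
      ((1 / lam) • (P τ ∘L P τ) - (Q + Qb)) (Icc 0 T) τ)
    (hPT : P T = QT + QbT)
    (hSg : ∀ τ ∈ Icc (0 : ℝ) T, HasDerivWithinAt Sg
      ((1 / lam) • (Sg τ ∘L P τ + P τ ∘L Sg τ) + (1 / lam) • (Sg τ ∘L Sg τ)
        - adjoint S ∘L Qb ∘L S + (Qb ∘L S + adjoint S ∘L Qb)) (Icc 0 T) τ)
    (hSgT : Sg T = adjoint ST ∘L QbT ∘L ST - (QbT ∘L ST + adjoint ST ∘L QbT)) :
    ∀ X : Lp (EuclideanSpace ℝ (Fin n)) 2 μ, ∀ t ∈ Icc (0 : ℝ) T,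
      ∃ DU : Lp (EuclideanSpace ℝ (Fin n)) 2 μ →L[ℝ] Lp (EuclideanSpace ℝ (Fin n)) 2 μ,
        (∀ Z : Lp (EuclideanSpace ℝ (Fin n)) 2 μ,
          DU Z = (P t).compLp Z + Lp.const 2 μ (Sg t (expVal μ Z))) ∧
        HasFDerivAt (fun X' => Uq μ P Sg X' t) DU X ∧
        HasDerivWithinAt (fun τ => Uq μ P Sg X τ)
          ((1 / lam) • DU (Uq μ P Sg X t) -
            ((Q + Qb).compLp X + Lp.const 2 μ
              ((adjoint S ∘L Qb ∘L S - Qb ∘L S - adjoint S ∘L Qb) (expVal μ X))))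
          (Icc 0 T) t ∧
        Uq μ P Sg X T = (QT + QbT).compLp X + Lp.const 2 μ
          ((adjoint ST ∘L QbT ∘L ST - QbT ∘L ST - adjoint ST ∘L QbT) (expVal μ X)) := by
  intro X t ht
  classical
  set v := expVal μ X with hv
  set DU : Lp (EuclideanSpace ℝ (Fin n)) 2 μ →L[ℝ] Lp (EuclideanSpace ℝ (Fin n)) 2 μ :=
    (P t).compLpL 2 μ + (Lp.constL 2 μ ℝ) ∘L (Sg t) ∘L (expValCLM μ) with hDU
  have hDUapp : ∀ Z : Lp (EuclideanSpace ℝ (Fin n)) 2 μ,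
      DU Z = (P t).compLp Z + Lp.const 2 μ (Sg t (expVal μ Z)) := by
    intro Z
    simp only [hDU, ContinuousLinearMap.add_apply, coe_comp', Function.comp_apply,
      expValCLM_apply]
    rfl
  refine ⟨DU, hDUapp, ?_, ?_, ?_⟩
  · have hfun : (fun X' => Uq μ P Sg X' t) = ⇑DU := funext fun Z => (hDUapp Z).symm
    rw [hfun]
    exact DU.hasFDerivAt
  · -- time derivative
    set F := compLpFlip μ X with hF
    set G : (EuclideanSpace ℝ (Fin n) →L[ℝ] EuclideanSpace ℝ (Fin n)) →L[ℝ]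
        Lp (EuclideanSpace ℝ (Fin n)) 2 μ :=
      (Lp.constL 2 μ ℝ) ∘L (ContinuousLinearMap.apply ℝ (EuclideanSpace ℝ (Fin n)) v) with hG
    have hGapp : ∀ A, G A = Lp.const 2 μ (A v) := fun A => rfl
    have hfun2 : (fun τ => Uq μ P Sg X τ) = fun τ => F (P τ) + G (Sg τ) :=
      funext fun τ => rfl
    have hD := (F.hasFDerivAt.comp_hasDerivWithinAt t (hP t ht)).add
      (G.hasFDerivAt.comp_hasDerivWithinAt t (hSg t ht))
    rw [hfun2]
    convert hD using 1
    case e'_4 => rfl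
    case e'_5 => rfl
    case e'_8 => rfl
    -- equality of the two derivative values
    have e2 : expVal μ (Uq μ P Sg X t) = P t v + Sg t v := by
      show expVal μ ((P t).compLp X + Lp.const 2 μ (Sg t v)) = _
      rw [expVal_add, expVal_compLp, expVal_const, hv]
    have e3 : DU (Uq μ P Sg X t)
        = F (P t ∘L P t) + Lp.const 2 μ (P t (Sg t v) + Sg t (P t v + Sg t v)) := by
      rw [hDUapp, e2]
      show (P t).compLp ((P t).compLp X + Lp.const 2 μ (Sg t v)) + _ = _
      rw [compLp_add_right, ← compLp_comp, compLp_const, map_add (Lp.const 2 μ)]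
      show F (P t ∘L P t) + _ + _ = _
      abel
    rw [e3]
    have hvec : ((1 / lam) • (Sg t ∘L P t + P t ∘L Sg t) + (1 / lam) • (Sg t ∘L Sg t)
          - adjoint S ∘L Qb ∘L S + (Qb ∘L S + adjoint S ∘L Qb)) v
        = (1 / lam) • (P t (Sg t v) + Sg t (P t v + Sg t v))
          - (adjoint S ∘L Qb ∘L S - Qb ∘L S - adjoint S ∘L Qb) v := by
      simp only [ContinuousLinearMap.add_apply, ContinuousLinearMap.sub_apply,
        ContinuousLinearMap.smul_apply, ContinuousLinearMap.comp_apply, map_add]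
      module
    set K := Lp.constL 2 μ ℝ (E := EuclideanSpace ℝ (Fin n)) with hKdef
    have hK : ∀ x : EuclideanSpace ℝ (Fin n), (Lp.const 2 μ x :
        Lp (EuclideanSpace ℝ (Fin n)) 2 μ) = K x := fun _ => rfl
    have hF' : (Q + Qb).compLp X = F (Q + Qb) := rfl
    rw [hGapp, hvec, hF']
    simp only [hK]
    rw [map_sub K, map_sub F, map_smul F, map_smul K, smul_add]
    abel
  · show (P T).compLp X + Lp.const 2 μ (Sg T v) = _
    rw [hPT, hSgT, sub_add_eq_sub_sub]
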